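/- Every edge labeled tree satisfies the Universal Difference Property: if G is a tree with edge labeling α over a commutative ring R, u, w ∈ V(G), and x ∈ α(P₁) where P₁ is the unique path from u to w, then there exists a spline ρ on (G, α) with ρ(u) − ρ(w) = x. -/

import Mathlib

open SimpleGraph

/-- A generalized spline on an edge labeled graph. -/
def IsSpline {V R : Type*} [CommRing R] (G : SimpleGraph V)
    (α : Sym2 V → Ideal R) (ρ : V → R) : Prop :=
  ∀ u v : V, G.Adj u v → ρ u - ρ v ∈ α s(u, v)

/-- The sum of the ideals labeling the edges of a walk. -/
def walkIdealSum {V R : Type*} [CommRing R] (G : SimpleGraph V)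
    (α : Sym2 V → Ideal R) {u w : V} (p : G.Walk u w) : Ideal R :=
  (p.edges.map α).sum

/-- The intersection of `α(P)` over all paths `P` from `u` to `w`. -/
def pathsInf {V R : Type*} [CommRing R] (G : SimpleGraph V)
    (α : Sym2 V → Ideal R) (u w : V) : Ideal R :=
  ⨅ (p : G.Walk u w) (_ : p.IsPath), walkIdealSum G α p

/-- The Universal Difference Property. -/
def UDP {V R : Type*} [CommRing R] (G : SimpleGraph V)
    (α : Sym2 V → Ideal R) : Prop :=
  ∀ u w : V, G.Reachable u w → ∀ x ∈ pathsInf G α u w,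
    ∃ ρ : V → R, IsSpline G α ρ ∧ ρ u - ρ w = x

/-- A Prüfer domain: every nonzero finitely generated ideal is invertible. -/
def IsPruferDomain (R : Type*) [CommRing R] [IsDomain R] : Prop :=
  ∀ I : Ideal R, I ≠ ⊥ → I.FG →
    IsUnit (I : FractionalIdeal (nonZeroDivisors R) (FractionRing R))

theorem tree_UDP {V R : Type*} [CommRing R] (G : SimpleGraph V) (hG : G.IsTree)
    (α : Sym2 V → Ideal R) (u w : V) (p : G.Walk u w) (hp : p.IsPath)
    (x : R) (hx : x ∈ walkIdealSum G α p) :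
    ∃ ρ : V → R, IsSpline G α ρ ∧ ρ u - ρ w = x := by
  classical
  revert hp
  revert x
  induction p with
  | nil =>
    intro x hx _
    simp only [walkIdealSum, Walk.edges_nil, List.map_nil, List.sum_nil,
      Ideal.zero_eq_bot, Ideal.mem_bot] at hx
    exact ⟨0, fun a b _ => by simpa using (α s(a, b)).zero_mem, by simp [hx]⟩
  | @cons u v w h q ih =>
    intro x hx hp
    have hq : q.IsPath := hp.of_cons
    have hu : u ∉ q.support := (Walk.cons_isPath_iff h q).mp hp |>.2
    rw [walkIdealSum, Walk.edges_cons, List.map_cons, List.sum_cons] at hx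
    obtain ⟨y, hy, z, hz, hyz⟩ := Submodule.mem_sup.mp hx
    obtain ⟨ρ', hρ', hρ'vw⟩ := ih z hz hq
    -- the bridge property of edge uv
    have hbridge : ¬ (G \ SimpleGraph.fromEdgeSet {s(u, v)}).Reachable u v :=
      ((isBridge_iff).mp (isAcyclic_iff_forall_adj_isBridge.mp hG.IsAcyclic h))
    set G' := G.deleteEdges {s(u, v)} with hG'
    have hG'eq : G' = G \ SimpleGraph.fromEdgeSet {s(u, v)} := rfl
    set S : Set V := {a | G'.Reachable a u} with hS
    have huS : u ∈ S := Set.mem_setOf.mpr (Reachable.refl u)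
    -- q avoids the edge s(u,v), so w and v are connected in G'
    have hqe : ∀ e ∈ q.edges, e ∉ ({s(u, v)} : Set (Sym2 V)) := by
      intro e he hmem
      rw [Set.mem_singleton_iff] at hmem
      subst hmem
      exact hu (q.fst_mem_support_of_mem_edges he)
    have hwS : w ∉ S := by
      intro hw
      exact hbridge (((q.toDeleteEdges _ hqe).reachable).trans hw).symm
    set c : R := y + ρ' v - ρ' u with hc
    refine ⟨fun a => ρ' a + if a ∈ S then c else 0, ?_, ?_⟩
    · intro a b hab
      by_cases ha : a ∈ S <;> by_cases hb : b ∈ S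
      · simpa [ha, hb] using hρ' a b hab
      · -- edge from S to outside must be s(u,v)
        have heq : s(a, b) = s(u, v) := by
          by_contra hne
          have : G'.Adj a b := by
            rw [hG', SimpleGraph.deleteEdges_adj]
            exact ⟨hab, by simpa using hne⟩
          exact hb (this.symm.reachable.trans ha)
        rcases Sym2.eq_iff.mp heq with ⟨rfl, rfl⟩ | ⟨rfl, rfl⟩
        · have hval : (ρ' a + c) - (ρ' b + 0) = y := by rw [hc]; ring
          beta_reduce; rw [if_pos ha, if_neg hb, hval]; exact hy
        · exact absurd huS hb
      · have heq : s(a, b) = s(u, v) := by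
          by_contra hne
          have : G'.Adj a b := by
            rw [hG', SimpleGraph.deleteEdges_adj]
            exact ⟨hab, by simpa using hne⟩
          exact ha (this.reachable.trans hb)
        rcases Sym2.eq_iff.mp heq with ⟨rfl, rfl⟩ | ⟨rfl, rfl⟩
        · exact absurd huS ha
        · have hval : (ρ' a + 0) - (ρ' b + c) = -y := by rw [hc]; ring
          beta_reduce
          rw [if_neg ha, if_pos hb, hval, Sym2.eq_swap]
          exact (α s(b, a)).neg_mem hy
      · simpa [ha, hb] using hρ' a b hab
    · beta_reduce
      rw [if_pos huS, if_neg hwS, hc]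
      linear_combination hρ'vw + hyz
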